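/- Let V_1, V_2 be nonzero subspaces of R^n. There exists a constant κ depending only on V_1 and V_2 such that every nonzero point x of R^n satisfies dist(x, V_1 ∩ V_2) ≤ κ·max{dist(x,V_1), dist(x,V_2)}, with the convention that the left-hand side equals 1 when V_1 ∩ V_2 = {0}. -/

import Mathlib

open scoped BigOperators

noncomputable def projDist {n : ℕ} (x y : EuclideanSpace ℝ (Fin n)) : ℝ :=
  Real.sqrt (‖x‖^2 * ‖y‖^2 - (inner ℝ x y : ℝ)^2) / (‖x‖ * ‖y‖)

noncomputable def distToSub {n : ℕ} (x : EuclideanSpace ℝ (Fin n))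
    (V : Submodule ℝ (EuclideanSpace ℝ (Fin n))) : ℝ :=
  ‖(Vᗮ.orthogonalProjection x : EuclideanSpace ℝ (Fin n))‖ / ‖x‖

noncomputable def subDist {n : ℕ} (W V : Submodule ℝ (EuclideanSpace ℝ (Fin n))) : ℝ :=
  sSup {d : ℝ | ∃ x ∈ W, x ≠ 0 ∧ d = distToSub x V}

noncomputable def gramVol {n : ℕ} {ι : Type*} [Fintype ι] [DecidableEq ι]
    (v : ι → EuclideanSpace ℝ (Fin n)) : ℝ :=
  Real.sqrt (Matrix.det (Matrix.of fun i j => (inner ℝ (v i) (v j) : ℝ)))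

noncomputable def Theta {n : ℕ} {ι : Type*} [Fintype ι] [DecidableEq ι]
    (v : ι → EuclideanSpace ℝ (Fin n)) : ℝ :=
  gramVol v / ∏ i, ‖v i‖

def IsIntPt {n : ℕ} (x : EuclideanSpace ℝ (Fin n)) : Prop := ∀ i, ∃ k : ℤ, x i = (k : ℝ)

noncomputable def toE {n : ℕ} (x : Fin n → ℤ) : EuclideanSpace ℝ (Fin n) :=
  (WithLp.equiv 2 (Fin n → ℝ)).symm (fun i => (x i : ℝ))

open Metric in
lemma key {n : ℕ} (V₁ V₂ : Submodule ℝ (EuclideanSpace ℝ (Fin n))) :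
    ∃ c : ℝ, 0 ≤ c ∧ ∀ x : EuclideanSpace ℝ (Fin n),
      ‖(Submodule.orthogonalProjectionOnto (V₁ ⊓ V₂)ᗮ x : EuclideanSpace ℝ (Fin n))‖ ≤
        c * max ‖(Submodule.orthogonalProjectionOnto V₁ᗮ x : EuclideanSpace ℝ (Fin n))‖
                ‖(Submodule.orthogonalProjectionOnto V₂ᗮ x : EuclideanSpace ℝ (Fin n))‖ := by
  set E := EuclideanSpace ℝ (Fin n)
  set W : Submodule ℝ E := (V₁ ⊓ V₂)ᗮ with hWdef
  by_cases hW : W = ⊥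
  · refine ⟨0, le_refl 0, fun x => ?_⟩
    have h0 : Submodule.orthogonalProjectionOnto W x = 0 := by
      rw [Submodule.orthogonalProjectionOnto_eq_zero_iff, hW]
      simp
    rw [h0]
    simp only [ZeroMemClass.coe_zero, norm_zero, zero_mul]
    exact le_refl 0
  · haveI : Nontrivial W := Submodule.nontrivial_iff_ne_bot.mpr hW
    have hS : (sphere (0 : W) 1).Nonempty := NormedSpace.sphere_nonempty.mpr zero_le_one
    set f : W → ℝ := fun y => max ‖(Submodule.orthogonalProjectionOnto V₁ᗮ (y : E) : E)‖
        ‖(Submodule.orthogonalProjectionOnto V₂ᗮ (y : E) : E)‖ with hf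
    have hcont : Continuous f := by
      apply Continuous.max <;> exact (continuous_norm.comp <|
        (continuous_subtype_val.comp ((Submodule.orthogonalProjectionOnto _).continuous.comp
          continuous_subtype_val)))
    obtain ⟨y₀, hy₀S, hmin⟩ := (isCompact_sphere (0 : W) 1).exists_isMinOn hS hcont.continuousOn
    have hy₀ : ‖y₀‖ = 1 := mem_sphere_zero_iff_norm.mp hy₀S
    have hm : 0 < f y₀ := by
      rcases lt_or_ge 0 (f y₀) with h | h
      · exact h
      · exfalso
        have h1 : ‖(Submodule.orthogonalProjectionOnto V₁ᗮ (y₀ : E) : E)‖ = 0 :=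
          le_antisymm (le_trans (le_max_left _ _) h) (norm_nonneg _)
        have h2 : ‖(Submodule.orthogonalProjectionOnto V₂ᗮ (y₀ : E) : E)‖ = 0 :=
          le_antisymm (le_trans (le_max_right _ _) h) (norm_nonneg _)
        have hm1 : (y₀ : E) ∈ V₁ := by
          have hz : Submodule.orthogonalProjectionOnto V₁ᗮ (y₀ : E) = 0 :=
            Subtype.ext (by simpa using norm_eq_zero.mp h1)
          have := Submodule.orthogonalProjectionOnto_eq_zero_iff.mp hz
          rwa [Submodule.orthogonal_orthogonal] at this
        have hm2 : (y₀ : E) ∈ V₂ := by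
          have hz : Submodule.orthogonalProjectionOnto V₂ᗮ (y₀ : E) = 0 :=
            Subtype.ext (by simpa using norm_eq_zero.mp h2)
          have := Submodule.orthogonalProjectionOnto_eq_zero_iff.mp hz
          rwa [Submodule.orthogonal_orthogonal] at this
        have hmem : (y₀ : E) ∈ V₁ ⊓ V₂ := ⟨hm1, hm2⟩
        have hperp : (y₀ : E) ∈ W := y₀.2
        have hz : (y₀ : E) = 0 := by
          have := Submodule.inner_right_of_mem_orthogonal (𝕜 := ℝ) hmem hperp
          exact inner_self_eq_zero.mp this
        rw [show y₀ = 0 from Subtype.ext hz, norm_zero] at hy₀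
        exact one_ne_zero hy₀.symm
    refine ⟨(f y₀)⁻¹, inv_nonneg.mpr hm.le, fun x => ?_⟩
    set y : W := Submodule.orthogonalProjectionOnto W x with hy
    have hproj : ∀ (V : Submodule ℝ E), V₁ ⊓ V₂ ≤ V →
        (Submodule.orthogonalProjectionOnto Vᗮ x : E) = (Submodule.orthogonalProjectionOnto Vᗮ (y : E) : E) := by
      intro V hle
      have h0 : x - (y : E) ∈ Wᗮ := Submodule.sub_starProjection_mem_orthogonal (K := W) x
      have hWW : Wᗮ = V₁ ⊓ V₂ := by rw [hWdef, Submodule.orthogonal_orthogonal]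
      rw [hWW] at h0
      have hz : Submodule.orthogonalProjectionOnto Vᗮ (x - (y : E)) = 0 :=
        Submodule.orthogonalProjectionOnto_apply_of_mem_orthogonal
          (by rw [Submodule.orthogonal_orthogonal]; exact hle h0)
      have := congrArg (Subtype.val) hz
      rw [map_sub] at this
      simp only [Submodule.coe_sub, ZeroMemClass.coe_zero, sub_eq_zero] at this
      exact this
    have h1 := hproj V₁ inf_le_left
    have h2 := hproj V₂ inf_le_right
    rw [h1, h2]
    rcases eq_or_ne y 0 with hy0 | hy0
    · rw [hy0]
      simp only [ZeroMemClass.coe_zero, norm_zero]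
      positivity
    · have hny : 0 < ‖y‖ := norm_pos_iff.mpr hy0
      set u : W := ‖y‖⁻¹ • y with hu
      have huS : u ∈ sphere (0 : W) 1 := by
        rw [mem_sphere_zero_iff_norm, norm_smul, norm_inv, norm_norm,
          inv_mul_cancel₀ hny.ne']
      have hfu : f u = ‖y‖⁻¹ * f y := by
        simp only [hf, hu, Submodule.coe_smul, map_smul, norm_smul, norm_inv, norm_norm]
        exact (mul_max_of_nonneg _ _ (inv_nonneg.mpr hny.le)).symm
      have hle2 : f y₀ ≤ ‖y‖⁻¹ * f y := hfu ▸ hmin huS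
      have hkey : f y₀ * ‖y‖ ≤ f y := by
        calc f y₀ * ‖y‖ ≤ (‖y‖⁻¹ * f y) * ‖y‖ := mul_le_mul_of_nonneg_right hle2 hny.le
          _ = f y := by rw [mul_comm (‖y‖⁻¹) (f y), mul_assoc, inv_mul_cancel₀ hny.ne', mul_one]
      show ‖(y : E)‖ ≤ (f y₀)⁻¹ * f y
      have hcoe : ‖(y : E)‖ = ‖y‖ := rfl
      rw [hcoe, le_inv_mul_iff₀ hm]
      linarith

open scoped Classical in
theorem stmt4 {n : ℕ} (V₁ V₂ : Submodule ℝ (EuclideanSpace ℝ (Fin n)))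
    (h₁ : V₁ ≠ ⊥) (h₂ : V₂ ≠ ⊥) :
    ∃ κ : ℝ, ∀ x : EuclideanSpace ℝ (Fin n), x ≠ 0 →
      (if V₁ ⊓ V₂ = ⊥ then (1 : ℝ) else distToSub x (V₁ ⊓ V₂)) ≤
        κ * max (distToSub x V₁) (distToSub x V₂) := by
  obtain ⟨c, hc, hkey⟩ := key V₁ V₂
  refine ⟨c, fun x hx => ?_⟩
  have hnx : 0 < ‖x‖ := norm_pos_iff.mpr hx
  have hmain : ‖(Submodule.orthogonalProjectionOnto (V₁ ⊓ V₂)ᗮ x : EuclideanSpace ℝ (Fin n))‖ / ‖x‖ ≤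
      c * max (distToSub x V₁) (distToSub x V₂) := by
    rw [distToSub, distToSub, max_div_div_right (norm_nonneg x), ← mul_div_assoc]
    gcongr
    exact hkey x
  by_cases hbot : V₁ ⊓ V₂ = ⊥
  · rw [if_pos hbot]
    have hsub : x - (Submodule.orthogonalProjectionOnto (V₁ ⊓ V₂)ᗮ x : EuclideanSpace ℝ (Fin n)) ∈ (V₁ ⊓ V₂)ᗮᗮ :=
      Submodule.sub_starProjection_mem_orthogonal (K := (V₁ ⊓ V₂)ᗮ) x
    rw [Submodule.orthogonal_orthogonal] at hsub
    have hz := (Submodule.eq_bot_iff _).mp hbot _ hsub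
    rw [sub_eq_zero] at hz
    rw [← hz, div_self hnx.ne'] at hmain
    exact hmain
  · rw [if_neg hbot]
    exact hmain
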